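/- For K > 0, let L₀^τ(K) ∈ ((1/(1+K))^{1/3}, 1) satisfy 2·I'(L₀^τ(K))/I(L₀^τ(K)) = (1+K)(L₀^τ(K))²/(1 - (1+K)(L₀^τ(K))³), where I(r) = √3·∫_r¹ dξ/√(1-ξ³). Then lim_{K→0⁺} L₀^τ(K) = 1 and lim_{K→0⁺} (L₀^τ)'(K) = -1/4. -/

import Mathlib

open intervalIntegral MeasureTheory Set Filter

noncomputable def Jfun : ℝ → ℝ := fun r => ∫ ξ in r..1, 1 / Real.sqrt (1 - ξ^3)

noncomputable def Ifun : ℝ → ℝ :=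
  fun r => Real.sqrt 3 * ∫ ξ in r..1, 1 / Real.sqrt (1 - ξ^3)

noncomputable def psi : ℝ → ℝ := fun r => r^3 - (1/2) * r^2 * Real.sqrt (1 - r^3) * Jfun r

noncomputable def psid : ℝ → ℝ := fun r =>
  3*r^2 + r^2/2 - r * Real.sqrt (1 - r^3) * Jfun r
    + (3*r^4/4) * (Jfun r / Real.sqrt (1 - r^3))


lemma meas_f : Measurable (fun ξ : ℝ => 1 / Real.sqrt (1 - ξ^3)) := by
  simp only [one_div]
  exact (Real.continuous_sqrt.measurable.comp (by fun_prop)).inv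

lemma cube_le {x : ℝ} (hx0 : 0 ≤ x) (hx1 : x ≤ 1) : x^3 ≤ x := by
  nlinarith [mul_nonneg (mul_nonneg hx0 (by linarith : (0:ℝ) ≤ 1 - x)) (by linarith : (0:ℝ) ≤ 1 + x)]

lemma intable {a : ℝ} (ha : 0 ≤ a) (ha1 : a ≤ 1) :
    IntervalIntegrable (fun ξ : ℝ => 1 / Real.sqrt (1 - ξ^3)) volume a 1 := by
  have hg : IntervalIntegrable (fun ξ : ℝ => ((1:ℝ) - ξ) ^ (-(1/2) : ℝ)) volume a 1 := by
    have h0 : IntervalIntegrable (fun x : ℝ => x ^ (-(1/2) : ℝ)) volume (1 - a) (1 - 1) :=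
      (intervalIntegrable_rpow' (by norm_num)).symm
    simpa using h0.comp_sub_left 1
  refine hg.mono_fun (meas_f.aestronglyMeasurable) ?_
  refine (ae_restrict_iff' measurableSet_uIoc).2 (Filter.Eventually.of_forall ?_)
  intro x hx
  rw [Set.uIoc_of_le ha1] at hx
  have hx0 : 0 < x := lt_of_le_of_lt ha hx.1
  have hx1 : x ≤ 1 := hx.2
  simp only [norm_div, norm_one, Real.norm_eq_abs]
  rcases eq_or_lt_of_le hx1 with h | h
  · subst h
    norm_num [Real.zero_rpow]
  · have h3 : x^3 ≤ x := cube_le hx0.le hx1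
    have h4 : (0:ℝ) < 1 - x := by linarith
    have h5 : (0:ℝ) < 1 - x^3 := by linarith
    rw [abs_of_nonneg (Real.sqrt_nonneg _), abs_of_pos (Real.rpow_pos_of_pos h4 _),
      Real.rpow_neg h4.le, ← Real.sqrt_eq_rpow, one_div]
    exact inv_anti₀ (Real.sqrt_pos.2 h4) (Real.sqrt_le_sqrt (by linarith))

lemma int_rpow_aux {r : ℝ} (hr : r ≤ 1) :
    ∫ ξ in r..1, ((1:ℝ) - ξ) ^ (-(1/2) : ℝ) = 2 * Real.sqrt (1 - r) := by
  have := integral_comp_sub_left (fun x : ℝ => x ^ (-(1/2) : ℝ)) 1 (a := r) (b := 1)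
  rw [this, integral_rpow (Or.inl (by norm_num))]
  rw [Real.sqrt_eq_rpow]
  norm_num
  ring

lemma intable_rpow {a : ℝ} (ha1 : a ≤ 1) :
    IntervalIntegrable (fun ξ : ℝ => ((1:ℝ) - ξ) ^ (-(1/2) : ℝ)) volume a 1 := by
  have h0 : IntervalIntegrable (fun x : ℝ => x ^ (-(1/2) : ℝ)) volume (1 - a) (1 - 1) :=
    (intervalIntegrable_rpow' (by norm_num)).symm
  simpa using h0.comp_sub_left 1

lemma Jfun_lower {r : ℝ} (h0 : 0 ≤ r) (h1 : r ≤ 1) :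
    2 / Real.sqrt 3 * Real.sqrt (1 - r) ≤ Jfun r := by
  have key : ∫ ξ in r..1, (1 / Real.sqrt 3) * ((1:ℝ) - ξ) ^ (-(1/2) : ℝ) ≤ Jfun r := by
    refine integral_mono_on h1 ((intable_rpow h1).const_mul _) (intable h0 h1) ?_
    intro x hx
    rcases eq_or_lt_of_le hx.2 with h | h
    · subst h; norm_num [Real.zero_rpow]
    · have hx0 : 0 ≤ x := le_trans h0 hx.1
      have h4 : (0:ℝ) < 1 - x := by linarith
      have h5 : (0:ℝ) < 1 - x^3 := by nlinarith [cube_le hx0 h.le]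
      rw [Real.rpow_neg h4.le, ← Real.sqrt_eq_rpow, one_div (Real.sqrt 3), div_eq_mul_inv,
        one_mul, ← mul_inv, ← Real.sqrt_mul (by norm_num : (0:ℝ) ≤ 3)]
      exact inv_anti₀ (Real.sqrt_pos.2 h5) (Real.sqrt_le_sqrt (by nlinarith [mul_nonneg (mul_nonneg h4.le h4.le) (by linarith : (0:ℝ) ≤ x + 2)]))
  rw [intervalIntegral.integral_const_mul, int_rpow_aux h1] at key
  calc 2 / Real.sqrt 3 * Real.sqrt (1 - r) = 1 / Real.sqrt 3 * (2 * Real.sqrt (1 - r)) := by ring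
  _ ≤ Jfun r := key

lemma Jfun_upper {r : ℝ} (h0 : 0 ≤ r) (h1 : r ≤ 1) :
    Jfun r ≤ 2 / Real.sqrt (1 + r + r^2) * Real.sqrt (1 - r) := by
  have key : Jfun r ≤ ∫ ξ in r..1, (1 / Real.sqrt (1 + r + r^2)) * ((1:ℝ) - ξ) ^ (-(1/2) : ℝ) := by
    refine integral_mono_on h1 (intable h0 h1) ((intable_rpow h1).const_mul _) ?_
    intro x hx
    rcases eq_or_lt_of_le hx.2 with h | h
    · subst h; norm_num [Real.zero_rpow]
    · have hx0 : 0 ≤ x := le_trans h0 hx.1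
      have h4 : (0:ℝ) < 1 - x := by linarith
      have h5 : (0:ℝ) < 1 - x^3 := by nlinarith [cube_le hx0 h.le]
      have h6 : (0:ℝ) < 1 + r + r^2 := by positivity
      rw [Real.rpow_neg h4.le, ← Real.sqrt_eq_rpow, one_div (Real.sqrt (1+r+r^2)),
        div_eq_mul_inv, one_mul, ← mul_inv, ← Real.sqrt_mul h6.le]
      refine inv_anti₀ (Real.sqrt_pos.2 (by positivity)) (Real.sqrt_le_sqrt ?_)
      have h7 : 1 + r + r^2 ≤ 1 + x + x^2 := by nlinarith [hx.1]
      nlinarith [mul_le_mul_of_nonneg_right h7 h4.le]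
  rw [intervalIntegral.integral_const_mul, int_rpow_aux h1] at key
  calc Jfun r ≤ 1 / Real.sqrt (1+r+r^2) * (2 * Real.sqrt (1 - r)) := key
  _ = 2 / Real.sqrt (1+r+r^2) * Real.sqrt (1 - r) := by ring

lemma Jfun_pos {r : ℝ} (h0 : 0 ≤ r) (h1 : r < 1) : 0 < Jfun r := by
  have := Jfun_lower h0 h1.le
  have h2 : 0 < 2 / Real.sqrt 3 * Real.sqrt (1 - r) := by
    have : (0:ℝ) < 1 - r := by linarith
    positivity
  linarith

lemma one_sub_cube_pos {r : ℝ} (h0 : 0 ≤ r) (h1 : r < 1) : 0 < 1 - r^3 := by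
  nlinarith [cube_le h0 h1.le]

lemma contAt_f {r : ℝ} (h0 : 0 ≤ r) (h1 : r < 1) :
    ContinuousAt (fun ξ : ℝ => 1 / Real.sqrt (1 - ξ^3)) r := by
  have h5 := one_sub_cube_pos h0 h1
  refine ContinuousAt.div continuousAt_const ?_ (by positivity)
  exact (Real.continuous_sqrt.continuousAt).comp (by fun_prop)

lemma Jfun_hasDeriv {r : ℝ} (h0 : 0 < r) (h1 : r < 1) :
    HasDerivAt Jfun (-(1 / Real.sqrt (1 - r^3))) r := by
  exact integral_hasDerivAt_left (intable h0.le h1.le)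
    meas_f.stronglyMeasurable.stronglyMeasurableAtFilter (contAt_f h0.le h1)

lemma Ifun_hasDeriv {r : ℝ} (h0 : 0 < r) (h1 : r < 1) :
    HasDerivAt Ifun (Real.sqrt 3 * -(1 / Real.sqrt (1 - r^3))) r :=
  (Jfun_hasDeriv h0 h1).const_mul _

lemma psi_hasDeriv {r : ℝ} (h0 : 0 < r) (h1 : r < 1) :
    HasDerivAt psi (psid r) r := by
  have h5 := one_sub_cube_pos h0.le h1
  have hs : Real.sqrt (1 - r^3) ≠ 0 := by positivity
  have hcube : HasDerivAt (fun x : ℝ => 1 - x^3) (-(3*r^2)) r := by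
    simpa using ((hasDerivAt_pow 3 r).const_sub 1)
  have hsqrt : HasDerivAt (fun x : ℝ => Real.sqrt (1 - x^3))
      (1 / (2 * Real.sqrt (1 - r^3)) * -(3*r^2)) r :=
    (Real.hasDerivAt_sqrt h5.ne').comp r hcube
  have hJ := Jfun_hasDeriv h0 h1
  have hprod : HasDerivAt (fun x : ℝ => (1/2) * x^2 * Real.sqrt (1 - x^3) * Jfun x)
      ((((1/2 : ℝ) * (2 * r)) * Real.sqrt (1 - r^3)
        + (1/2) * r^2 * (1 / (2 * Real.sqrt (1 - r^3)) * -(3*r^2))) * Jfun r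
       + (1/2) * r^2 * Real.sqrt (1 - r^3) * -(1 / Real.sqrt (1 - r^3))) r := by
    have h2 : HasDerivAt (fun x : ℝ => (1/2 : ℝ) * x^2) ((1/2 : ℝ) * (2 * r)) r := by
      simpa using (hasDerivAt_pow 2 r).const_mul (1/2 : ℝ)
    exact ((h2.mul hsqrt).mul hJ)
  have := (hasDerivAt_pow 3 r).sub hprod
  refine (show HasDerivAt psi _ r from this).congr_deriv ?_
  simp only [psid]
  field_simp
  ring

lemma Jfun_contOn : ContinuousOn Jfun (Icc (0:ℝ) 1) := by
  have h_int : IntegrableOn (fun ξ : ℝ => 1 / Real.sqrt (1 - ξ^3)) (uIcc (0:ℝ) 1) volume := by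
    rw [uIcc_of_le (by norm_num : (0:ℝ) ≤ 1)]
    exact (intervalIntegrable_iff_integrableOn_Icc_of_le (by norm_num)).1
      (intable (le_refl 0) zero_le_one)
  have := continuousOn_primitive_interval_left h_int
  rwa [uIcc_of_le (by norm_num : (0:ℝ) ≤ 1)] at this

lemma psi_contOn : ContinuousOn psi (Icc (0:ℝ) 1) := by
  refine ContinuousOn.sub (by fun_prop) ?_
  refine ContinuousOn.mul (ContinuousOn.mul (by fun_prop) ?_) Jfun_contOn
  exact (Real.continuous_sqrt.comp (by fun_prop)).continuousOn

lemma sqrt_one_sub_cube_eq {r : ℝ} (h1 : r ≤ 1) :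
    Real.sqrt (1 - r^3) = Real.sqrt (1 - r) * Real.sqrt (1 + r + r^2) := by
  rw [← Real.sqrt_mul (by linarith)]
  ring_nf

lemma tendsto_within_of_contAt {f : ℝ → ℝ} {y : ℝ} (h : ContinuousAt f 1) (hy : f 1 = y) :
    Tendsto f (nhdsWithin 1 (Ioo (0:ℝ) 1)) (nhds y) := by
  rw [← hy]
  exact (h.continuousWithinAt (s := Ioo (0:ℝ) 1)).tendsto

lemma tendsto_psid : Tendsto psid (nhdsWithin 1 (Ioo (0:ℝ) 1)) (nhds 4) := by
  have hmem : ∀ᶠ r in nhdsWithin 1 (Ioo (0:ℝ) 1), r ∈ Ioo (0:ℝ) 1 :=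
    eventually_mem_nhdsWithin
  have sqrt3 : Real.sqrt 3 * Real.sqrt 3 = 3 := Real.mul_self_sqrt (by norm_num)
  have sqrt3pos : 0 < Real.sqrt 3 := by positivity
  have h1 : Tendsto (fun r : ℝ => 3*r^2 + r^2/2) (nhdsWithin 1 (Ioo (0:ℝ) 1)) (nhds (7/2)) :=
    tendsto_within_of_contAt (by fun_prop) (by norm_num)
  have h2 : Tendsto (fun r : ℝ => r * Real.sqrt (1 - r^3) * Jfun r)
      (nhdsWithin 1 (Ioo (0:ℝ) 1)) (nhds 0) := by
    refine tendsto_of_tendsto_of_tendsto_of_le_of_le'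
      (g := fun _ : ℝ => (0:ℝ)) (h := fun r : ℝ => 2 * Real.sqrt (1 - r))
      tendsto_const_nhds
      (tendsto_within_of_contAt (by fun_prop) (by norm_num)) ?_ ?_
    · filter_upwards [hmem] with r hr
      have hs := Real.sqrt_nonneg (1 - r^3)
      have hJ := (Jfun_pos hr.1.le hr.2).le
      exact mul_nonneg (mul_nonneg hr.1.le hs) hJ
    · filter_upwards [hmem] with r hr
      have hd : (1:ℝ) ≤ Real.sqrt (1 + r + r^2) := by
        have := Real.sqrt_le_sqrt (show (1:ℝ) ≤ 1 + r + r^2 by nlinarith [hr.1.le])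
        rwa [Real.sqrt_one] at this
      have h3 : Jfun r ≤ 2 * Real.sqrt (1 - r) := by
        have h4 : 2 / Real.sqrt (1 + r + r^2) ≤ 2 := by
          rw [div_le_iff₀ (by positivity)]
          nlinarith
        have := mul_le_mul_of_nonneg_right h4 (Real.sqrt_nonneg (1 - r))
        linarith [Jfun_upper hr.1.le hr.2.le]
      have hs1 : Real.sqrt (1 - r^3) ≤ 1 := by
        have := Real.sqrt_le_sqrt (show 1 - r^3 ≤ 1 by nlinarith [pow_nonneg hr.1.le 3])
        rwa [Real.sqrt_one] at this
      have hJ := (Jfun_pos hr.1.le hr.2).le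
      calc r * Real.sqrt (1 - r^3) * Jfun r ≤ 1 * 1 * Jfun r := by
            have := mul_le_mul (mul_le_mul hr.2.le hs1 (Real.sqrt_nonneg _) (by norm_num))
              (le_refl (Jfun r)) hJ (by norm_num)
            simpa using this
        _ = Jfun r := by ring
        _ ≤ 2 * Real.sqrt (1 - r) := h3
  have h3 : Tendsto (fun r : ℝ => (3*r^4/4) * (Jfun r / Real.sqrt (1 - r^3)))
      (nhdsWithin 1 (Ioo (0:ℝ) 1)) (nhds (1/2)) := by
    have hratio : ∀ r ∈ Ioo (0:ℝ) 1,
        2 / Real.sqrt 3 / Real.sqrt (1 + r + r^2) ≤ Jfun r / Real.sqrt (1 - r^3) ∧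
        Jfun r / Real.sqrt (1 - r^3) ≤ 2 / (1 + r + r^2) := by
      intro r hr
      have hc : (0:ℝ) < 1 + r + r^2 := by nlinarith [hr.1.le]
      have hcs : 0 < Real.sqrt (1 + r + r^2) := Real.sqrt_pos.2 hc
      have hrs : 0 < Real.sqrt (1 - r) := Real.sqrt_pos.2 (by linarith [hr.2])
      have hs : 0 < Real.sqrt (1 - r^3) := Real.sqrt_pos.2 (one_sub_cube_pos hr.1.le hr.2)
      have heq := sqrt_one_sub_cube_eq hr.2.le
      have hcsq : Real.sqrt (1 + r + r^2) * Real.sqrt (1 + r + r^2) = 1 + r + r^2 :=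
        Real.mul_self_sqrt hc.le
      constructor
      · rw [heq, le_div_iff₀ (by positivity)]
        have hre : 2 / Real.sqrt 3 / Real.sqrt (1 + r + r^2) * (Real.sqrt (1 - r) * Real.sqrt (1 + r + r^2))
            = 2 / Real.sqrt 3 * Real.sqrt (1 - r) := by
          field_simp
        rw [hre]
        exact Jfun_lower hr.1.le hr.2.le
      · rw [heq, div_le_iff₀ (by positivity)]
        have hre : 2 / (1 + r + r^2) * (Real.sqrt (1 - r) * Real.sqrt (1 + r + r^2))
            = 2 / Real.sqrt (1 + r + r^2) * Real.sqrt (1 - r) := by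
          field_simp
          linear_combination hcsq
        rw [hre]
        exact Jfun_upper hr.1.le hr.2.le
    have hcont1 : ContinuousAt (fun r : ℝ => (3*r^4/4) * (2 / Real.sqrt 3 / Real.sqrt (1 + r + r^2))) 1 := by
      have hs : ContinuousAt (fun r : ℝ => Real.sqrt (1 + r + r^2)) 1 := by fun_prop
      have h4 : Real.sqrt (1 + 1 + 1^2) ≠ 0 := by positivity
      exact (by fun_prop : ContinuousAt (fun r : ℝ => 3*r^4/4) 1).mul
        ((continuousAt_const.div continuousAt_const (by positivity : Real.sqrt 3 ≠ 0)).div hs h4)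
    have hcont2 : ContinuousAt (fun r : ℝ => (3*r^4/4) * (2 / (1 + r + r^2))) 1 := by
      have h4 : (1:ℝ) + 1 + 1^2 ≠ 0 := by norm_num
      exact (by fun_prop : ContinuousAt (fun r : ℝ => 3*r^4/4) 1).mul
        (continuousAt_const.div (by fun_prop) h4)
    refine tendsto_of_tendsto_of_tendsto_of_le_of_le'
      (tendsto_within_of_contAt hcont1 ?_) (tendsto_within_of_contAt hcont2 ?_) ?_ ?_
    · show (3*(1:ℝ)^4/4) * (2 / Real.sqrt 3 / Real.sqrt (1 + 1 + 1^2)) = 1/2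
      rw [show (1:ℝ) + 1 + 1^2 = 3 by norm_num, div_div, sqrt3]
      norm_num
    · norm_num
    · filter_upwards [hmem] with r hr
      exact mul_le_mul_of_nonneg_left ((hratio r hr).1) (by positivity)
    · filter_upwards [hmem] with r hr
      exact mul_le_mul_of_nonneg_left ((hratio r hr).2) (by positivity)
  have htot := (h1.sub h2).add h3
  rw [show (7/2 : ℝ) - 0 + 1/2 = 4 by norm_num] at htot
  exact htot.congr (fun r => by simp only [psid])

lemma psi_eq {K r : ℝ} (hK : 0 < K) (hr : r ∈ Ioo ((1/(1+K)) ^ ((1:ℝ)/3)) 1)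
    (heq : 2 * deriv Ifun r / Ifun r = (1+K)*r^2/(1-(1+K)*r^3)) :
    0 < r ∧ psi r = 1/(1+K) := by
  have hK1 : (0:ℝ) < 1 + K := by linarith
  have hbase : (0:ℝ) < 1/(1+K) := by positivity
  have hlow : (0:ℝ) < (1/(1+K)) ^ ((1:ℝ)/3) := Real.rpow_pos_of_pos hbase _
  have h0 : 0 < r := lt_trans hlow hr.1
  have h1 : r < 1 := hr.2
  have hcube : ((1/(1+K)) ^ ((1:ℝ)/3))^3 = 1/(1+K) := by
    rw [← Real.rpow_natCast ((1/(1+K)) ^ ((1:ℝ)/3)) 3, ← Real.rpow_mul hbase.le]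
    norm_num
  have hr3 : 1/(1+K) < r^3 := by
    rw [← hcube]
    exact pow_lt_pow_left₀ hr.1 hlow.le (by norm_num)
  have hden : 1 - (1+K)*r^3 < 0 := by
    have h2 : (1+K) * (1/(1+K)) < (1+K) * r^3 := by
      exact mul_lt_mul_of_pos_left hr3 hK1
    rw [mul_one_div, div_self hK1.ne'] at h2
    linarith
  have hs := one_sub_cube_pos h0.le h1
  have hsq : 0 < Real.sqrt (1 - r^3) := Real.sqrt_pos.2 hs
  have hJ : 0 < Jfun r := Jfun_pos h0.le h1
  have sqrt3 : Real.sqrt 3 * Real.sqrt 3 = 3 := Real.mul_self_sqrt (by norm_num)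
  have sqrt3pos : (0:ℝ) < Real.sqrt 3 := by positivity
  have hIf : Ifun r = Real.sqrt 3 * Jfun r := rfl
  rw [(Ifun_hasDeriv h0 h1).deriv, hIf] at heq
  rw [div_eq_div_iff (by positivity) hden.ne] at heq
  refine ⟨h0, ?_⟩
  simp only [psi]
  rw [eq_div_iff hK1.ne']
  field_simp at heq
  have goal2 : 2*Real.sqrt 3 * ((r^3 - 1/2 * r^2 * Real.sqrt (1 - r^3) * Jfun r) * (1+K))
      = 2*Real.sqrt 3 * 1 := by linear_combination Real.sqrt 3 * heq
  exact mul_left_cancel₀ (by positivity) goal2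

theorem stmt_18 (L : ℝ → ℝ)
    (hL : ∀ K : ℝ, 0 < K →
      L K ∈ Set.Ioo ((1/(1+K)) ^ ((1:ℝ)/3)) 1 ∧
      2 * deriv Ifun (L K) / Ifun (L K) =
        (1+K) * (L K)^2 / (1 - (1+K) * (L K)^3)) :
    Filter.Tendsto L (nhdsWithin 0 (Set.Ioi 0)) (nhds 1) ∧
      Filter.Tendsto (deriv L) (nhdsWithin 0 (Set.Ioi 0)) (nhds (-1/4)) := by
  have hfact : ∀ K : ℝ, 0 < K → 0 < L K ∧ L K < 1 ∧ psi (L K) = 1/(1+K) := by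
    intro K hK
    obtain ⟨hmem, heq⟩ := hL K hK
    obtain ⟨h0, hps⟩ := psi_eq hK hmem heq
    exact ⟨h0, hmem.2, hps⟩
  -- Part 1
  have hlowc : ContinuousAt (fun K : ℝ => (1/(1+K)) ^ ((1:ℝ)/3)) 0 := by
    have h2 : ContinuousAt (fun K : ℝ => 1/(1+K)) 0 := by
      apply ContinuousAt.div continuousAt_const (by fun_prop)
      norm_num
    exact h2.rpow_const (Or.inr (by norm_num))
  have hlow : Tendsto (fun K : ℝ => (1/(1+K)) ^ ((1:ℝ)/3)) (nhdsWithin 0 (Ioi 0)) (nhds 1) := by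
    have hthis := (hlowc.tendsto).mono_left (nhdsWithin_le_nhds (s := Ioi (0:ℝ)))
    rwa [show ((1:ℝ)/(1+0)) ^ ((1:ℝ)/3) = 1 by
      rw [show (1:ℝ)/(1+0) = 1 by norm_num, Real.one_rpow]] at hthis
  have part1 : Tendsto L (nhdsWithin 0 (Ioi 0)) (nhds 1) := by
    refine tendsto_of_tendsto_of_tendsto_of_le_of_le' hlow tendsto_const_nhds ?_ ?_
    · filter_upwards [eventually_mem_nhdsWithin] with K hK
      exact ((hL K hK).1.1).le
    · filter_upwards [eventually_mem_nhdsWithin] with K hK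
      exact ((hL K hK).1.2).le
  refine ⟨part1, ?_⟩
  -- L tends to 1 within Ioo 0 1
  have hL01 : Tendsto L (nhdsWithin 0 (Ioi 0)) (nhdsWithin 1 (Ioo (0:ℝ) 1)) := by
    rw [tendsto_nhdsWithin_iff]
    refine ⟨part1, ?_⟩
    filter_upwards [eventually_mem_nhdsWithin] with K hK
    exact ⟨(hfact K hK).1, (hfact K hK).2.1⟩
  -- positivity of psid near 1
  have hev : ∀ᶠ r in nhdsWithin 1 (Ioo (0:ℝ) 1), 0 < psid r :=
    tendsto_psid.eventually (eventually_gt_nhds (by norm_num : (0:ℝ) < 4))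
  obtain ⟨U, hUopen, hU1, hsub⟩ := mem_nhdsWithin.1 hev
  obtain ⟨ε, hε, hball⟩ := Metric.isOpen_iff.1 hUopen 1 hU1
  set a : ℝ := max (1 - ε/2) (1/2) with ha_def
  have ha2 : (1/2 : ℝ) ≤ a := le_max_right _ _
  have ha1 : a < 1 := max_lt (by linarith) (by norm_num)
  have ha0 : (0:ℝ) < a := lt_of_lt_of_le (by norm_num) ha2
  have hIoo : ∀ r ∈ Ioo a 1, r ∈ Ioo (0:ℝ) 1 := fun r hr => ⟨lt_trans ha0 hr.1, hr.2⟩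
  have hpos : ∀ r ∈ Ioo a 1, 0 < psid r := by
    intro r hr
    refine hsub ⟨hball ?_, hIoo r hr⟩
    rw [Metric.mem_ball, Real.dist_eq, abs_of_nonpos (by linarith [hr.2])]
    have : 1 - ε/2 ≤ a := le_max_left _ _
    linarith [hr.1]
  have hmono : StrictMonoOn psi (Icc a 1) := by
    refine strictMonoOn_of_deriv_pos (convex_Icc a 1)
      (psi_contOn.mono (Icc_subset_Icc ha0.le le_rfl)) ?_
    intro x hx
    rw [interior_Icc] at hx
    rw [(psi_hasDeriv (lt_trans ha0 hx.1) hx.2).deriv]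
    exact hpos x hx
  -- δ such that L maps (0,δ) into (a,1)
  have hevent : ∀ᶠ K in nhdsWithin 0 (Ioi (0:ℝ)), L K ∈ Ioo a 1 := by
    have hgta : ∀ᶠ K in nhdsWithin 0 (Ioi (0:ℝ)), a < L K :=
      part1.eventually (eventually_gt_nhds ha1)
    filter_upwards [hgta, eventually_mem_nhdsWithin] with K h1 h2
    exact ⟨h1, (hfact K h2).2.1⟩
  obtain ⟨δ, hδmem, hδ⟩ := mem_nhdsGT_iff_exists_Ioo_subset.1 hevent
  have hδpos : 0 < δ := hδmem
  -- continuity of L on (0, δ)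
  have hcontL : ∀ K₀ ∈ Ioo (0:ℝ) δ, ContinuousAt L K₀ := by
    intro K₀ hK₀
    have hr0 : L K₀ ∈ Ioo a 1 := hδ hK₀
    rw [ContinuousAt, Metric.tendsto_nhds]
    intro ε' hε'
    set η := min ε' (min ((1 - L K₀)/2) ((L K₀ - a)/2)) with hη_def
    have hηpos : 0 < η := by
      refine lt_min hε' (lt_min ?_ ?_) <;> [linarith [hr0.2]; linarith [hr0.1]]
    have hη1 : η ≤ (1 - L K₀)/2 := le_trans (min_le_right _ _) (min_le_left _ _)
    have hη2 : η ≤ (L K₀ - a)/2 := le_trans (min_le_right _ _) (min_le_right _ _)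
    have hηε : η ≤ ε' := min_le_left _ _
    have hloIcc : L K₀ - η ∈ Icc a 1 := ⟨by linarith, by linarith [hr0.2]⟩
    have hhiIcc : L K₀ + η ∈ Icc a 1 := ⟨by linarith [hr0.1], by linarith⟩
    have hmidIcc : L K₀ ∈ Icc a 1 := ⟨hr0.1.le, hr0.2.le⟩
    have hlt1 : psi (L K₀ - η) < psi (L K₀) := hmono hloIcc hmidIcc (by linarith)
    have hlt2 : psi (L K₀) < psi (L K₀ + η) := hmono hmidIcc hhiIcc (by linarith)
    have hcont0 : ContinuousAt (fun K : ℝ => 1/(1+K)) K₀ := by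
      apply ContinuousAt.div continuousAt_const (by fun_prop)
      intro h
      have := hK₀.1
      linarith [h]
    have hopen2 : ∀ᶠ K in nhds K₀, 1/(1+K) ∈ Ioo (psi (L K₀ - η)) (psi (L K₀ + η)) := by
      refine hcont0.eventually_mem (isOpen_Ioo.mem_nhds ?_)
      rw [← (hfact K₀ hK₀.1).2.2]
      exact ⟨hlt1, hlt2⟩
    filter_upwards [isOpen_Ioo.eventually_mem hK₀, hopen2] with K h1 h2
    have hLK : L K ∈ Icc a 1 := ⟨(hδ h1).1.le, (hδ h1).2.le⟩
    have hgt : L K₀ - η < L K := by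
      by_contra hcon
      push_neg at hcon
      have := hmono.monotoneOn hLK hloIcc hcon
      rw [(hfact K h1.1).2.2] at this
      exact absurd h2.1 (not_lt.2 this)
    have hlt : L K < L K₀ + η := by
      by_contra hcon
      push_neg at hcon
      have := hmono.monotoneOn hhiIcc hLK hcon
      rw [(hfact K h1.1).2.2] at this
      exact absurd h2.2 (not_lt.2 this)
    rw [Real.dist_eq, abs_lt]
    constructor <;> linarith
  -- derivative of L on (0, δ)
  have hderivL : ∀ K₀ ∈ Ioo (0:ℝ) δ,
      HasDerivAt L ((-psid (L K₀) / (psi (L K₀))^2)⁻¹) K₀ := by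
    intro K₀ hK₀
    have hr0 : L K₀ ∈ Ioo a 1 := hδ hK₀
    have hr01 : L K₀ ∈ Ioo (0:ℝ) 1 := hIoo _ hr0
    have hpsine : psi (L K₀) ≠ 0 := by
      rw [(hfact K₀ hK₀.1).2.2]
      exact ne_of_gt (div_pos one_pos (by linarith [hK₀.1]))
    have hpsidpos : 0 < psid (L K₀) := hpos _ hr0
    have hf : HasDerivAt (fun r => 1/psi r - 1) (-psid (L K₀) / (psi (L K₀))^2) (L K₀) := by
      have h1 := (psi_hasDeriv hr01.1 hr01.2).inv hpsine
      have h2 := h1.sub_const 1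
      simp only [one_div]
      exact h2
    have hf' : -psid (L K₀) / (psi (L K₀))^2 ≠ 0 := by
      refine ne_of_lt (div_neg_of_neg_of_pos (by linarith) ?_)
      positivity
    have hfg : ∀ᶠ y in nhds K₀, (fun r => 1/psi r - 1) (L y) = y := by
      filter_upwards [isOpen_Ioo.eventually_mem hK₀] with y hy
      show 1/psi (L y) - 1 = y
      rw [(hfact y hy.1).2.2, one_div_one_div]
      ring
    exact HasDerivAt.of_local_left_inverse (hcontL K₀ hK₀) hf hf' hfg
  -- final limit
  have hpsidL : Tendsto (fun K => psid (L K)) (nhdsWithin 0 (Ioi (0:ℝ))) (nhds 4) :=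
    tendsto_psid.comp hL01
  have hq : Tendsto (fun K => psi (L K)) (nhdsWithin 0 (Ioi (0:ℝ))) (nhds 1) := by
    have hbase : Tendsto (fun K : ℝ => 1/(1+K)) (nhdsWithin 0 (Ioi 0)) (nhds 1) := by
      have hc : ContinuousAt (fun K : ℝ => 1/(1+K)) 0 := by
        apply ContinuousAt.div continuousAt_const (by fun_prop)
        norm_num
      have hthis := hc.tendsto.mono_left (nhdsWithin_le_nhds (s := Ioi (0:ℝ)))
      rwa [show (1:ℝ)/(1+0) = 1 by norm_num] at hthis
    refine hbase.congr' ?_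
    filter_upwards [eventually_mem_nhdsWithin] with K hK
    exact ((hfact K hK).2.2).symm
  have hT : Tendsto (fun K => (-psid (L K) / (psi (L K))^2)⁻¹)
      (nhdsWithin 0 (Ioi (0:ℝ))) (nhds (-1/4)) := by
    have hbase : Tendsto (fun K => -psid (L K) / (psi (L K))^2)
        (nhdsWithin 0 (Ioi (0:ℝ))) (nhds (-4)) := by
      have := (hpsidL.neg).div (hq.pow 2) (by norm_num : (1:ℝ)^2 ≠ 0)
      norm_num at this
      exact this
    have htmp := hbase.inv₀ (by norm_num : (-4:ℝ) ≠ 0)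
    rwa [show ((-4:ℝ))⁻¹ = -1/4 by norm_num] at htmp
  refine hT.congr' ?_
  filter_upwards [Ioo_mem_nhdsGT_of_mem ⟨le_refl 0, hδpos⟩] with K hK
  exact ((hderivL K hK).deriv).symm
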